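/- Let G be a finite group, N a subgroup of G of index 2, and C a subgroup of G not contained in N. Then for every n ∈ N: |C ∩ N| · #{g ∈ G : g⁻¹·n·g ∈ C} = |C| · #{g ∈ N : g⁻¹·n·g ∈ C ∩ N}. (Equivalently, the restriction to N of the character of Ind_C^G(1) equals the character of Ind_{C∩N}^N(1).) -/
import Mathlib

/-- A subgroup of index two is normal. -/
lemma normal_of_index_two' {G : Type*} [Group G] (N : Subgroup G) (hN : N.index = 2) :
    N.Normal := by
  constructor
  intro x hx g
  rw [Subgroup.mul_mem_iff_of_index_two hN, Subgroup.mul_mem_iff_of_index_two hN,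
    N.inv_mem_iff]
  tauto

/-- Induction–restriction counting identity: if `N` has index 2 in the finite group `G` and
`C` is a subgroup not contained in `N`, then for every `n ∈ N`,
`|C ∩ N| · #{g ∈ G | g⁻¹ n g ∈ C} = |C| · #{g ∈ N | g⁻¹ n g ∈ C ∩ N}`. -/
theorem induction_restriction_not_le
    (G : Type*) [Group G] [Fintype G]
    (N C : Subgroup G) (hN : N.index = 2) (hC : ¬ C ≤ N)
    (n : G) (hn : n ∈ N) :
    Nat.card ↥(C ⊓ N) * Nat.card {g : G | g⁻¹ * n * g ∈ C}
      = Nat.card ↥C * Nat.card {g : G | g ∈ N ∧ g⁻¹ * n * g ∈ C ⊓ N} := by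
  classical
  haveI : N.Normal := normal_of_index_two' N hN
  obtain ⟨c, hcC, hcN⟩ : ∃ c, c ∈ C ∧ c ∉ N := by
    rw [SetLike.not_le_iff_exists] at hC; exact hC
  -- Step 1: |C| = 2 * |C ⊓ N|
  have hrel : N.relIndex C = 2 := by
    have hdvd : N.relIndex C ∣ 2 := hN ▸ Subgroup.relIndex_dvd_index_of_normal N C
    have hne1 : N.relIndex C ≠ 1 := fun h1 => hC (Subgroup.relIndex_eq_one.mp h1)
    have hne0 : N.relIndex C ≠ 0 := Subgroup.index_ne_zero_of_finite
    have hle := Nat.le_of_dvd (by norm_num) hdvd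
    omega
  have hcard : Nat.card ↥C = 2 * Nat.card ↥(C ⊓ N) := by
    have h1 : Nat.card ↥(C ⊓ N) = Nat.card ↥((C ⊓ N).subgroupOf C) :=
      Nat.card_congr (Subgroup.subgroupOfEquivOfLe inf_le_left).toEquiv.symm
    have h2 : ((C ⊓ N).subgroupOf C).index = 2 := by
      rw [show (C ⊓ N).subgroupOf C = N.subgroupOf C by
        rw [Subgroup.subgroupOf, Subgroup.subgroupOf, Subgroup.comap_inf]
        simp]
      exact hrel
    have := Subgroup.index_mul_card ((C ⊓ N).subgroupOf C)
    rw [h2] at this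
    rw [h1, ← this]
  -- Step 2: the condition g⁻¹ n g ∈ C is equivalent to g⁻¹ n g ∈ C ⊓ N
  have hNmem : ∀ g : G, g⁻¹ * n * g ∈ N := fun g => by
    have := Subgroup.Normal.conj_mem ‹N.Normal› n hn g⁻¹
    simpa using this
  have hset : {g : G | g⁻¹ * n * g ∈ C} = {g : G | g⁻¹ * n * g ∈ C ⊓ N} := by
    ext g; simp [Subgroup.mem_inf, hNmem g]
  -- Step 3: counting with finsets
  have hfin : ∀ (p : G → Prop) [DecidablePred p],
      Nat.card {g : G | p g} = (Finset.univ.filter p).card := fun p _ => by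
    rw [Nat.card_eq_fintype_card]
    simp [Fintype.card_subtype]
  rw [hset, hcard, hfin, hfin]
  -- Step 4: bijection between the two cosets via right multiplication by c
  set p : G → Prop := fun g => g⁻¹ * n * g ∈ C ⊓ N with hp
  have keyconj : ∀ (d : G), d ∈ C → ∀ x ∈ C ⊓ N, d * x * d⁻¹ ∈ C ⊓ N := by
    intro d hd x hx
    exact ⟨C.mul_mem (C.mul_mem hd hx.1) (C.inv_mem hd),
      Subgroup.Normal.conj_mem ‹N.Normal› x hx.2 d⟩
  have hpc : ∀ g : G, p (g * c) ↔ p g := by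
    intro g
    have e : (g * c)⁻¹ * n * (g * c) = c⁻¹ * (g⁻¹ * n * g) * c⁻¹⁻¹ := by group
    constructor
    · intro h
      have h2 := keyconj c hcC _ (show (g * c)⁻¹ * n * (g * c) ∈ C ⊓ N from h)
      show g⁻¹ * n * g ∈ C ⊓ N
      have e2 : c * ((g * c)⁻¹ * n * (g * c)) * c⁻¹ = g⁻¹ * n * g := by group
      rwa [e2] at h2
    · intro h
      have h2 := keyconj c⁻¹ (C.inv_mem hcC) _ (show g⁻¹ * n * g ∈ C ⊓ N from h)
      show (g * c)⁻¹ * n * (g * c) ∈ C ⊓ N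
      rwa [e]
  have hmemc : ∀ g : G, g * c ∈ N ↔ g ∉ N := by
    intro g
    rw [Subgroup.mul_mem_iff_of_index_two hN]
    tauto
  -- split the filter
  have hsplit : (Finset.univ.filter p).card
      = (Finset.univ.filter (fun g => p g ∧ g ∈ N)).card
        + (Finset.univ.filter (fun g => p g ∧ g ∉ N)).card := by
    rw [← Finset.card_union_of_disjoint]
    · congr 1
      ext g
      simp only [Finset.mem_union, Finset.mem_filter, Finset.mem_univ, true_and]
      tauto
    · rw [Finset.disjoint_filter]
      tauto
  have hbij : (Finset.univ.filter (fun g => p g ∧ g ∉ N)).card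
      = (Finset.univ.filter (fun g => p g ∧ g ∈ N)).card := by
    apply Finset.card_bij (fun g _ => g * c)
    · intro a ha
      simp only [Finset.mem_filter, Finset.mem_univ, true_and] at ha ⊢
      exact ⟨(hpc a).2 ha.1, (hmemc a).2 ha.2⟩
    · intro a _ b _ hab
      exact mul_right_cancel hab
    · intro b hb
      simp only [Finset.mem_filter, Finset.mem_univ, true_and] at hb
      refine ⟨b * c⁻¹, ?_, by group⟩
      simp only [Finset.mem_filter, Finset.mem_univ, true_and]
      constructor
      · have := (hpc (b * c⁻¹)).1
        simpa using this (by simpa using hb.1)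
      · rw [Subgroup.mul_mem_iff_of_index_two hN, N.inv_mem_iff]
        simp [hb.2, hcN]
  have hcount : (Finset.univ.filter p).card
      = 2 * (Finset.univ.filter (fun g => g ∈ N ∧ p g)).card := by
    have : (Finset.univ.filter (fun g => g ∈ N ∧ p g))
        = (Finset.univ.filter (fun g => p g ∧ g ∈ N)) := by
      ext g; simp only [Finset.mem_filter]; tauto
    rw [this, hsplit, hbij]; ring
  rw [hcount]; ring
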